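/- For real numbers 0 < T' ≤ T and an angle ϑ ∈ (0, π/2), the complex temporal domain Δ_ϑ^{T',T} equals the set-sum [0, T−T'] + Δ_ϑ^{(T')}, i.e. Δ_ϑ^{T',T} = { ξ + t' : ξ ∈ [0, T−T'], t' ∈ Δ_ϑ^{(T')} }. -/

import Mathlib

open Real Set

/-- The open sector `Δ_ϑ = { ϱ e^{iθ} : ϱ > 0, θ ∈ (−ϑ, ϑ) }`. -/
noncomputable def sector (ϑ : ℝ) : Set ℂ :=
  {t : ℂ | ∃ ϱ θ : ℝ, 0 < ϱ ∧ θ ∈ Set.Ioo (-ϑ) ϑ ∧ t = ϱ * Complex.exp (θ * Complex.I)}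

/-- The truncated triangle `Δ_ϑ^{(T')} = Δ_ϑ ∩ { 0 < Re t < T' }`. -/
noncomputable def triangleSet (ϑ T' : ℝ) : Set ℂ :=
  sector ϑ ∩ {t : ℂ | 0 < t.re ∧ t.re < T'}

/-- The temporal domain `Δ_ϑ^{T',T} = Δ_ϑ^{(T)} ∩ { |Im t| < T'·tan ϑ }.` -/
noncomputable def DeltaSet (ϑ T' T : ℝ) : Set ℂ :=
  triangleSet ϑ T ∩ {t : ℂ | |t.im| < T' * Real.tan ϑ}

lemma mem_sector_iff {ϑ : ℝ} (hϑ : ϑ ∈ Set.Ioo 0 (π / 2)) (t : ℂ) :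
    t ∈ sector ϑ ↔ 0 < t.re ∧ |t.im| < t.re * Real.tan ϑ := by
  obtain ⟨hϑ0, hϑ2⟩ := hϑ
  constructor
  · rintro ⟨ϱ, θ, hϱ, ⟨hθ1, hθ2⟩, rfl⟩
    have hre : ((ϱ : ℂ) * Complex.exp (θ * Complex.I)).re = ϱ * Real.cos θ := by
      simp [Complex.exp_ofReal_mul_I_re, Complex.exp_ofReal_mul_I_im, Complex.mul_re]
    have him : ((ϱ : ℂ) * Complex.exp (θ * Complex.I)).im = ϱ * Real.sin θ := by
      simp [Complex.exp_ofReal_mul_I_re, Complex.exp_ofReal_mul_I_im, Complex.mul_im]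
    have hcos : 0 < Real.cos θ :=
      Real.cos_pos_of_mem_Ioo ⟨by linarith, by linarith⟩
    have htan1 : Real.tan θ < Real.tan ϑ :=
      Real.tan_lt_tan_of_lt_of_lt_pi_div_two (by linarith) hϑ2 hθ2
    have htan2 : Real.tan (-ϑ) < Real.tan θ :=
      Real.tan_lt_tan_of_lt_of_lt_pi_div_two (by linarith) (by linarith) hθ1
    rw [Real.tan_neg] at htan2
    have hsin : Real.sin θ = Real.cos θ * Real.tan θ := by
      rw [Real.tan_eq_sin_div_cos]; field_simp
    rw [hre, him]
    refine ⟨by positivity, ?_⟩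
    rw [abs_lt]
    have hpc : 0 < ϱ * Real.cos θ := mul_pos hϱ hcos
    constructor
    · nlinarith [mul_lt_mul_of_pos_left htan2 hpc]
    · nlinarith [mul_lt_mul_of_pos_left htan1 hpc]
  · rintro ⟨h1, h2⟩
    have htanpos : 0 < Real.tan ϑ := Real.tan_pos_of_pos_of_lt_pi_div_two hϑ0 hϑ2
    set θ := Real.arctan (t.im / t.re) with hθdef
    have hcos : 0 < Real.cos θ := Real.cos_arctan_pos _
    have htanθ : Real.tan θ = t.im / t.re := Real.tan_arctan _
    refine ⟨t.re / Real.cos θ, θ, by positivity, ⟨?_, ?_⟩, ?_⟩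
    · have : -Real.tan ϑ < t.im / t.re := by
        rw [lt_div_iff₀ h1]
        nlinarith [neg_abs_le t.im]
      have := Real.arctan_strictMono this
      rwa [← Real.tan_neg, Real.arctan_tan (by linarith) (by linarith)] at this
    · have : t.im / t.re < Real.tan ϑ := by
        rw [div_lt_iff₀ h1]
        nlinarith [le_abs_self t.im]
      have := Real.arctan_strictMono this
      rwa [Real.arctan_tan (by linarith) (by linarith)] at this
    · have hsin : Real.sin θ = Real.cos θ * (t.im / t.re) := by
        rw [← htanθ, Real.tan_eq_sin_div_cos]; field_simp
      apply Complex.ext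
      · simp only [Complex.add_re, Complex.mul_re, Complex.ofReal_re, Complex.ofReal_im,
          Complex.exp_ofReal_mul_I_re, Complex.exp_ofReal_mul_I_im]
        field_simp; simp
      · simp only [Complex.add_im, Complex.mul_im, Complex.ofReal_re, Complex.ofReal_im,
          Complex.exp_ofReal_mul_I_re, Complex.exp_ofReal_mul_I_im]
        rw [hsin]
        field_simp
        ring

theorem Delta_eq_interval_add_triangle (ϑ T' T : ℝ)
    (hϑ : ϑ ∈ Set.Ioo 0 (π / 2)) (hT' : 0 < T') (hT : T' ≤ T) :
    DeltaSet ϑ T' T =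
      {t : ℂ | ∃ ξ ∈ Set.Icc (0 : ℝ) (T - T'), ∃ t' ∈ triangleSet ϑ T', t = (ξ : ℂ) + t'} := by
  have htanpos : 0 < Real.tan ϑ := Real.tan_pos_of_pos_of_lt_pi_div_two hϑ.1 hϑ.2
  ext t
  simp only [DeltaSet, triangleSet, Set.mem_inter_iff, Set.mem_setOf_eq, mem_sector_iff hϑ,
    Set.mem_Icc]
  constructor
  · rintro ⟨⟨⟨h1, h2⟩, _, h3⟩, h4⟩
    set a := |t.im| / Real.tan ϑ with hadef
    have ha0 : 0 ≤ a := by positivity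
    have har : a < t.re := (div_lt_iff₀ htanpos).mpr (by nlinarith)
    have haT' : a < T' := (div_lt_iff₀ htanpos).mpr h4
    set ξ := max 0 (min (T - T') (t.re - (a + T') / 2)) with hξdef
    have hξ0 : 0 ≤ ξ := le_max_left _ _
    have hξT : ξ ≤ T - T' := max_le (by linarith) (min_le_left _ _)
    have hkey : a < t.re - ξ ∧ t.re - ξ < T' := by
      rcases le_or_gt (min (T - T') (t.re - (a + T') / 2)) 0 with h | h
      · have hξeq : ξ = 0 := max_eq_left h
        rcases min_le_iff.mp h with h' | h'
        · constructor <;> simp [hξeq] <;> linarith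
        · constructor <;> simp [hξeq] <;> linarith
      · have hξeq : ξ = min (T - T') (t.re - (a + T') / 2) := max_eq_right h.le
        rcases le_total (T - T') (t.re - (a + T') / 2) with h' | h'
        · rw [hξeq, min_eq_left h']
          constructor <;> linarith
        · rw [hξeq, min_eq_right h']
          constructor <;> linarith
    refine ⟨ξ, ⟨hξ0, hξT⟩, t - ξ, ⟨⟨?_, ?_⟩, ?_, ?_⟩, by ring⟩
    · simp only [Complex.sub_re, Complex.ofReal_re]; linarith [hkey.1]
    · simp only [Complex.sub_re, Complex.sub_im, Complex.ofReal_re, Complex.ofReal_im, sub_zero]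
      calc |t.im| = a * Real.tan ϑ := by rw [hadef]; field_simp
        _ < (t.re - ξ) * Real.tan ϑ := by nlinarith [hkey.1]
    · simp only [Complex.sub_re, Complex.ofReal_re]; linarith [hkey.1]
    · simp only [Complex.sub_re, Complex.ofReal_re]; linarith [hkey.2]
  · rintro ⟨ξ, ⟨hξ0, hξT⟩, t', ⟨⟨h1, h2⟩, h3, h4⟩, rfl⟩
    simp only [Complex.add_re, Complex.add_im, Complex.ofReal_re, Complex.ofReal_im, zero_add]
    refine ⟨⟨⟨by linarith, ?_⟩, by linarith, by linarith⟩, ?_⟩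
    · nlinarith
    · nlinarith
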